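/- Let A be a finite alphabet, let Θ be an involutive antimorphism of A*, and let u be an infinite word over A. Then the Θ-defect of u is finite if and only if there exists an integer H such that for every prefix w of u with |w| ≥ H, the longest Θ-palindromic suffix of w occurs in w exactly once, except for those prefixes of the form w = pa with a ∈ A such that γ_Θ(p) ≠ γ_Θ(w) (i.e., such that neither a nor Θ(a), with a ≠ Θ(a), occurs in p). -/

import Mathlib

open scoped Classical

/-- The finite word `w` occurs in the infinite word `u` at position `i`. -/
def OccursAt {A : Type*} (u : ℕ → A) (w : List A) (i : ℕ) : Prop :=
  w = (List.range w.length).map fun k => u (i + k)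

/-- The finite word `w` is a factor of the infinite word `u`. -/
def IsFactor {A : Type*} (u : ℕ → A) (w : List A) : Prop :=
  ∃ i, OccursAt u w i

/-- The (involutive) antimorphism of `A*` induced by the letter map `θ`:
it reverses a word and applies `θ` letterwise. -/
def antim {A : Type*} (θ : A → A) (w : List A) : List A :=
  (w.map θ).reverse

/-- `w` is a `θ`-palindrome, i.e. a fixed point of the antimorphism induced by `θ`. -/
def IsPalin {A : Type*} (θ : A → A) (w : List A) : Prop :=
  antim θ w = w

/-- Factor complexity of the infinite word `u`. -/
noncomputable def fC {A : Type*} (u : ℕ → A) (n : ℕ) : ℕ :=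
  Set.ncard {w : List A | w.length = n ∧ IsFactor u w}

/-- `θ`-palindromic complexity of the infinite word `u`. -/
noncomputable def fP {A : Type*} (u : ℕ → A) (θ : A → A) (n : ℕ) : ℕ :=
  Set.ncard {w : List A | w.length = n ∧ IsFactor u w ∧ IsPalin θ w}

/-- `γ_Θ(w)`: the number of pairs `{a, θ a}` with `a` occurring in `w` and `a ≠ θ a`. -/
noncomputable def gammaTheta {A : Type*} (θ : A → A) (w : List A) : ℕ :=
  Set.ncard {s : Set A | ∃ a ∈ w, θ a ≠ a ∧ s = {a, θ a}}

/-- The set of `θ`-palindromic factors of the finite word `w`. -/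
def palFactors {A : Type*} (θ : A → A) (w : List A) : Set (List A) :=
  {p | p <:+: w ∧ IsPalin θ p}

/-- The `Θ`-defect of a finite word `w`. -/
noncomputable def defect {A : Type*} (θ : A → A) (w : List A) : ℤ :=
  (w.length : ℤ) + 1 - gammaTheta θ w - Set.ncard (palFactors θ w)

/-- The number of occurrences of `w` in the finite word `v`. -/
noncomputable def numOcc {A : Type*} (w v : List A) : ℕ :=
  Set.ncard {i : ℕ | i + w.length ≤ v.length ∧ w <+: v.drop i}

section Basic
variable {A : Type*} (θ : A → A)

lemma antim_append (v w : List A) : antim θ (v ++ w) = antim θ w ++ antim θ v := by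
  simp [antim]

lemma antim_length (w : List A) : (antim θ w).length = w.length := by simp [antim]

lemma antim_nil : antim θ ([] : List A) = [] := rfl

lemma antim_singleton (a : A) : antim θ [a] = [θ a] := rfl

lemma antim_antim (hθ : Function.Involutive θ) (w : List A) :
    antim θ (antim θ w) = w := by
  simp [antim, List.map_reverse, List.map_map, Function.comp, hθ.comp_self]

lemma palin_nil : IsPalin θ ([] : List A) := rfl

lemma palFactors_finite (w : List A) : (palFactors θ w).Finite := by
  apply Set.Finite.subset (w.sublists.toFinset : Finset (List A)).finite_toSet
  intro p hp
  simp only [Finset.coe_sort_coe, List.coe_toFinset, Set.mem_setOf_eq, List.mem_sublists]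
  exact hp.1.sublist

lemma nil_mem_palFactors (w : List A) : [] ∈ palFactors θ w :=
  ⟨List.nil_infix, palin_nil θ⟩

lemma palFactors_mono {v w : List A} (h : v <:+: w) :
    palFactors θ v ⊆ palFactors θ w := fun p hp => ⟨hp.1.trans h, hp.2⟩

lemma antim_suffix_prefix {v w : List A} (h : v <:+ w) : antim θ v <+: antim θ w := by
  obtain ⟨x, rfl⟩ := h
  rw [antim_append]
  exact List.prefix_append _ _

lemma antim_infix {v w : List A} (h : v <:+: w) : antim θ v <:+: antim θ w := by
  obtain ⟨x, y, rfl⟩ := h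
  rw [antim_append, antim_append, ← List.append_assoc]
  exact List.infix_append _ _ _

end Basic

section Inv
variable {A : Type*} {θ : A → A} (hθ : Function.Involutive θ)
include hθ

lemma gamma_antim (w : List A) : gammaTheta θ (antim θ w) = gammaTheta θ w := by
  unfold gammaTheta
  congr 1
  ext s
  simp only [Set.mem_setOf_eq, antim, List.mem_reverse, List.mem_map]
  constructor
  · rintro ⟨a, ⟨b, hb, rfl⟩, hne, rfl⟩
    rw [hθ b] at hne ⊢
    exact ⟨b, hb, fun h => hne (congrArg θ h.symm ▸ (hθ b).symm ▸ rfl), Set.pair_comm _ _⟩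
  · rintro ⟨a, ha, hne, rfl⟩
    refine ⟨θ a, ⟨a, ha, rfl⟩, ?_, ?_⟩
    · rw [hθ a]; exact fun h => hne h.symm
    · rw [hθ a, Set.pair_comm]

lemma palFactors_antim (w : List A) : palFactors θ (antim θ w) = palFactors θ w := by
  ext p
  constructor
  · rintro ⟨hinf, hpal⟩
    refine ⟨?_, hpal⟩
    have := antim_infix θ hinf
    rw [antim_antim θ hθ] at this
    rwa [show antim θ p = p from hpal] at this
  · rintro ⟨hinf, hpal⟩
    refine ⟨?_, hpal⟩
    have := antim_infix θ hinf
    rwa [show antim θ p = p from hpal] at this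

lemma defect_antim (w : List A) : defect θ (antim θ w) = defect θ w := by
  unfold defect
  rw [gamma_antim hθ, palFactors_antim hθ, antim_length]

end Inv

section Snoc
variable {A : Type*} {θ : A → A}

lemma infix_snoc {q p : List A} {a : A} (h : q <:+: p ++ [a]) :
    q <:+: p ∨ q <:+ p ++ [a] := by
  obtain ⟨x, y, hxy⟩ := h
  rcases y.eq_nil_or_concat with rfl | ⟨y', c, rfl⟩
  · right
    exact ⟨x, by simpa using hxy⟩
  · left
    have hxy2 : (x ++ (q ++ y')) ++ [c] = p ++ [a] := by
      simpa [List.append_assoc] using hxy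
    obtain ⟨h1, -⟩ := List.append_inj' hxy2 rfl
    exact ⟨x, y', by rw [← h1, List.append_assoc]⟩

lemma suffix_snoc_decomp {q p : List A} {a : A} (h : q <:+ p ++ [a]) (hq : q ≠ []) :
    ∃ q' x, q = q' ++ [a] ∧ p = x ++ q' := by
  obtain ⟨x, hx⟩ := h
  rcases q.eq_nil_or_concat with rfl | ⟨q', c, rfl⟩
  · exact absurd rfl hq
  · have hx2 : (x ++ q') ++ [c] = p ++ [a] := by
      simpa [List.append_assoc] using hx
    obtain ⟨h1, h2⟩ := List.append_inj' hx2 rfl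
    obtain rfl : c = a := by simpa using h2
    exact ⟨q', x, by simp, h1.symm⟩

lemma pal_snoc {q' : List A} {a : A} (h : IsPalin θ (q' ++ [a])) :
    (q' = [] ∧ θ a = a) ∨ ∃ t, q' = θ a :: t := by
  have h' : θ a :: antim θ q' = q' ++ [a] := by
    have := antim_append θ q' [a]
    rw [antim_singleton] at this
    rw [← h]
    exact this.symm ▸ rfl
  cases q' with
  | nil => left; simpa [antim] using h'
  | cons b t =>
    right
    rw [List.cons_append] at h'
    exact ⟨t, by rw [(List.cons.injEq _ _ _ _).mp h' |>.1]⟩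

lemma gamma_set_finite (w : List A) :
    {s : Set A | ∃ a ∈ w, θ a ≠ a ∧ s = {a, θ a}}.Finite := by
  apply Set.Finite.subset ((w.toFinset : Set A).toFinite.image fun a => ({a, θ a} : Set A))
  rintro s ⟨a, ha, -, rfl⟩
  exact ⟨a, by simpa using ha, rfl⟩

lemma gamma_mono_snoc (p : List A) (a : A) : gammaTheta θ p ≤ gammaTheta θ (p ++ [a]) := by
  apply Set.ncard_le_ncard _ (gamma_set_finite _)
  rintro s ⟨b, hb, h1, rfl⟩
  exact ⟨b, List.mem_append_left _ hb, h1, rfl⟩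

lemma gamma_snoc_le (p : List A) (a : A) :
    gammaTheta θ (p ++ [a]) ≤ gammaTheta θ p + 1 := by
  unfold gammaTheta
  have hsub : {s : Set A | ∃ b ∈ p ++ [a], θ b ≠ b ∧ s = {b, θ b}} ⊆
      insert ({a, θ a} : Set A) {s : Set A | ∃ b ∈ p, θ b ≠ b ∧ s = {b, θ b}} := by
    rintro s ⟨b, hb, h1, rfl⟩
    rcases List.mem_append.mp hb with hb | hb
    · exact Set.mem_insert_of_mem _ ⟨b, hb, h1, rfl⟩
    · obtain rfl : b = a := by simpa using hb
      exact Set.mem_insert _ _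
  exact le_trans (Set.ncard_le_ncard hsub ((gamma_set_finite p).insert _))
    (Set.ncard_insert_le _ _)

lemma gamma_ne_snoc (hθ : Function.Involutive θ) {p : List A} {a : A}
    (h : gammaTheta θ p ≠ gammaTheta θ (p ++ [a])) :
    θ a ≠ a ∧ a ∉ p ∧ θ a ∉ p := by
  by_contra hcon
  apply h
  unfold gammaTheta
  congr 1
  apply Set.Subset.antisymm
  · rintro s ⟨b, hb, h1, rfl⟩
    exact ⟨b, List.mem_append_left _ hb, h1, rfl⟩
  · rintro s ⟨b, hb, h1, rfl⟩
    rcases List.mem_append.mp hb with hb | hb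
    · exact ⟨b, hb, h1, rfl⟩
    · obtain rfl : b = a := by simpa using hb
      push_neg at hcon
      rcases Decidable.em (θ b = b) with he | he
      · exact absurd he h1
      rcases Decidable.em (b ∈ p) with hbp | hbp
      · exact ⟨b, hbp, h1, rfl⟩
      · refine ⟨θ b, hcon he hbp, ?_, ?_⟩
        · rw [hθ b]; exact fun hh => h1 hh.symm
        · rw [hθ b, Set.pair_comm]

lemma pal_suffix_trivial (h : θ a ≠ a) (ha : a ∉ p) (hta : θ a ∉ p) :
    ∀ q : List A, q <:+ p ++ [a] → IsPalin θ q → q = [] := by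
  intro q hsuf hpal
  by_contra hq
  obtain ⟨q', x, rfl, hp⟩ := suffix_snoc_decomp hsuf hq
  rcases pal_snoc hpal with ⟨rfl, he⟩ | ⟨t, rfl⟩
  · exact h he
  · exact hta (hp ▸ List.mem_append_right _ List.mem_cons_self)

lemma palFactors_snoc_eq {p : List A} {a : A} (h : θ a ≠ a) (ha : a ∉ p) (hta : θ a ∉ p) :
    palFactors θ (p ++ [a]) = palFactors θ p := by
  apply Set.Subset.antisymm
  · rintro q ⟨hinf, hpal⟩
    rcases infix_snoc hinf with hi | hs
    · exact ⟨hi, hpal⟩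
    · rw [pal_suffix_trivial h ha hta q hs hpal]
      exact nil_mem_palFactors θ p
  · exact palFactors_mono θ ⟨[], [a], by simp⟩

lemma new_pal_suffix {q p : List A} {a : A} (hq : q ∈ palFactors θ (p ++ [a]))
    (hq' : q ∉ palFactors θ p) : q <:+ p ++ [a] := by
  rcases infix_snoc hq.1 with hi | hs
  · exact absurd ⟨hi, hq.2⟩ hq'
  · exact hs

lemma new_subsingleton (hθ : Function.Involutive θ) (p : List A) (a : A) :
    (palFactors θ (p ++ [a]) \ palFactors θ p).Subsingleton := by
  have key : ∀ q1 q2, q1 ∈ palFactors θ (p ++ [a]) \ palFactors θ p →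
      q2 ∈ palFactors θ (p ++ [a]) \ palFactors θ p → q1.length ≤ q2.length → q1 = q2 := by
    rintro q1 q2 ⟨hq1, hq1'⟩ ⟨hq2, hq2'⟩ hlen
    have hs1 := new_pal_suffix hq1 hq1'
    have hs2 := new_pal_suffix hq2 hq2'
    by_contra hne
    have hlt : q1.length < q2.length := by
      rcases lt_or_eq_of_le hlen with h | h
      · exact h
      · exact absurd (List.suffix_of_suffix_length_le hs1 hs2 hlen |>.eq_of_length h) hne
    have hq2ne : q2 ≠ [] := by
      intro hh; rw [hh] at hlt; simp at hlt
    obtain ⟨q2', x, rfl, hp⟩ := suffix_snoc_decomp hs2 hq2ne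
    -- q1 is a prefix of q2 since both palindromes, q1 suffix of q2
    have hsuf12 : q1 <:+ q2' ++ [a] := List.suffix_of_suffix_length_le hs1 hs2 hlen
    have hpre : q1 <+: q2' ++ [a] := by
      have h' := antim_suffix_prefix θ hsuf12
      rwa [hq1.2, hq2.2] at h'
    have hle : q1.length ≤ q2'.length := by
      simp only [List.length_append, List.length_singleton] at hlt
      omega
    have hpre' : q1 <+: q2' :=
      List.prefix_of_prefix_length_le hpre (q2'.prefix_append [a]) hle
    exact hq1' ⟨hpre'.isInfix.trans ⟨x, [], by simp [hp]⟩, hq1.2⟩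
  intro q1 h1 q2 h2
  rcases le_total q1.length q2.length with h | h
  · exact key q1 q2 h1 h2 h
  · exact (key q2 q1 h2 h1 h).symm

end Snoc

section Count
variable {A : Type*} {θ : A → A}

lemma ncard_palFactors_snoc_le (hθ : Function.Involutive θ) (p : List A) (a : A) :
    (palFactors θ (p ++ [a])).ncard ≤ (palFactors θ p).ncard + 1 := by
  have hsub : palFactors θ (p ++ [a]) ⊆
      palFactors θ p ∪ (palFactors θ (p ++ [a]) \ palFactors θ p) := by
    intro q hq
    by_cases h : q ∈ palFactors θ p
    · exact Set.mem_union_left _ h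
    · exact Set.mem_union_right _ ⟨hq, h⟩
  calc (palFactors θ (p ++ [a])).ncard
      ≤ (palFactors θ p ∪ (palFactors θ (p ++ [a]) \ palFactors θ p)).ncard :=
        Set.ncard_le_ncard hsub (((palFactors_finite θ p).union
          ((palFactors_finite θ (p ++ [a])).diff)))
    _ ≤ (palFactors θ p).ncard + (palFactors θ (p ++ [a]) \ palFactors θ p).ncard :=
        Set.ncard_union_le _ _
    _ ≤ (palFactors θ p).ncard + 1 := by
        gcongr
        rcases (palFactors θ (p ++ [a]) \ palFactors θ p).eq_empty_or_nonempty with h | ⟨q, hq⟩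
        · simp [h]
        · rw [(new_subsingleton hθ p a).eq_singleton_of_mem hq]
          simp

lemma drop_suffix_eq {s w : List A} (h : s <:+ w) :
    w.drop (w.length - s.length) = s := by
  obtain ⟨x, rfl⟩ := h
  simp [List.length_append]

lemma numOcc_suffix_eq_one_iff {s p : List A} {a : A} (h : s <:+ p ++ [a]) :
    numOcc s (p ++ [a]) = 1 ↔ ¬ s <:+: p := by
  obtain ⟨w, hw⟩ : ∃ w', w' = p ++ [a] := ⟨_, rfl⟩
  rw [← hw] at h ⊢
  have hwlen : w.length = p.length + 1 := by rw [hw]; simp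
  have hslen : s.length ≤ w.length := h.length_le
  have hfin : {i : ℕ | i + s.length ≤ w.length ∧ s <+: w.drop i}.Finite :=
    Set.Finite.subset (Set.finite_Iio (w.length + 1))
      (fun i hi => by have h1 := hi.1; simp only [Set.mem_Iio]; omega)
  have hmem0 : w.length - s.length ∈ {i : ℕ | i + s.length ≤ w.length ∧ s <+: w.drop i} := by
    refine ⟨by omega, ?_⟩
    rw [drop_suffix_eq h]
  have claim1 : ∀ i, i + s.length ≤ w.length → s <+: w.drop i →
      i ≠ w.length - s.length → s <:+: p := by
    intro i hle hpre hne
    obtain ⟨r, hr⟩ := hpre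
    have hilt : i + s.length ≤ p.length := by omega
    have hw2 : w.take i ++ (s ++ r) = w := by rw [hr]; exact List.take_append_drop i w
    have hrne : r ≠ [] := by
      intro hrnil
      rw [hrnil, List.append_nil] at hw2
      have := congrArg List.length hw2
      simp only [List.length_append, List.length_take] at this
      omega
    obtain ⟨r', c, rfl⟩ := r.eq_nil_or_concat.resolve_left hrne
    have hw3 : (w.take i ++ (s ++ r')) ++ [c] = p ++ [a] := by
      rw [← hw]
      conv_rhs => rw [← hw2]
      simp [List.append_assoc, List.concat_eq_append]
    obtain ⟨h1, -⟩ := List.append_inj' hw3 rfl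
    exact ⟨w.take i, r', by rw [← h1, List.append_assoc]⟩
  have claim2 : s <:+: p → ∃ i, (i + s.length ≤ w.length ∧ s <+: w.drop i) ∧
      i ≠ w.length - s.length := by
    rintro ⟨x, y, hxy⟩
    have hxylen := congrArg List.length hxy
    simp only [List.length_append] at hxylen
    refine ⟨x.length, ⟨by omega, ?_⟩, by omega⟩
    have hdrop : w.drop x.length = s ++ (y ++ [a]) := by
      rw [hw, ← hxy]
      simp [List.append_assoc, List.drop_left]
    rw [hdrop]
    exact ⟨y ++ [a], rfl⟩
  constructor
  · intro h1 hinf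
    obtain ⟨i, hi, hine⟩ := claim2 hinf
    have h2 : 1 < {i : ℕ | i + s.length ≤ w.length ∧ s <+: w.drop i}.ncard :=
      (Set.one_lt_ncard hfin).mpr ⟨i, hi, _, hmem0, hine⟩
    rw [show numOcc s w = {i : ℕ | i + s.length ≤ w.length ∧ s <+: w.drop i}.ncard
      from rfl] at h1
    omega
  · intro hninf
    have hset : {i : ℕ | i + s.length ≤ w.length ∧ s <+: w.drop i}
        = {w.length - s.length} := by
      apply Set.Subset.antisymm
      · rintro i ⟨h1, h2⟩
        by_contra hne
        exact hninf (claim1 i h1 h2 (by simpa using hne))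
      · simp only [Set.singleton_subset_iff]; exact hmem0
    rw [show numOcc s w = {i : ℕ | i + s.length ≤ w.length ∧ s <+: w.drop i}.ncard
      from rfl, hset, Set.ncard_singleton]

end Count

section Defect
variable {A : Type*} {θ : A → A}

lemma suffix_infix {v w : List A} (h : v <:+ w) : v <:+: w := h.isInfix

lemma palFactors_snoc_ge (p : List A) (a : A) :
    (palFactors θ p).ncard ≤ (palFactors θ (p ++ [a])).ncard :=
  Set.ncard_le_ncard (palFactors_mono θ ⟨[], [a], by simp⟩) (palFactors_finite θ _)

lemma length_snoc (p : List A) (a : A) : (p ++ [a]).length = p.length + 1 := by simp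

lemma defect_snoc_mono (hθ : Function.Involutive θ) (p : List A) (a : A) :
    defect θ p ≤ defect θ (p ++ [a]) := by
  unfold defect
  rw [length_snoc]
  by_cases hγ : gammaTheta θ p = gammaTheta θ (p ++ [a])
  · have hP := ncard_palFactors_snoc_le hθ p a
    rw [hγ]
    push_cast
    omega
  · obtain ⟨h1, h2, h3⟩ := gamma_ne_snoc hθ hγ
    rw [palFactors_snoc_eq h1 h2 h3]
    have hg1 := gamma_snoc_le (θ := θ) p a
    push_cast
    omega

lemma defect_snoc_exceptional (hθ : Function.Involutive θ) {p : List A} {a : A}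
    (h : gammaTheta θ p ≠ gammaTheta θ (p ++ [a])) :
    defect θ (p ++ [a]) = defect θ p := by
  obtain ⟨h1, h2, h3⟩ := gamma_ne_snoc hθ h
  have hγeq : gammaTheta θ (p ++ [a]) = gammaTheta θ p + 1 := by
    have := gamma_snoc_le (θ := θ) p a
    have := gamma_mono_snoc (θ := θ) p a
    omega
  unfold defect
  rw [length_snoc, palFactors_snoc_eq h1 h2 h3, hγeq]
  push_cast
  ring

lemma defect_snoc_of_new (hθ : Function.Involutive θ) {s p : List A} {a : A}
    (h : s <:+ p ++ [a]) (hpal : IsPalin θ s) (hninf : ¬ s <:+: p)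
    (hγ : gammaTheta θ p = gammaTheta θ (p ++ [a])) :
    defect θ (p ++ [a]) = defect θ p := by
  have hns : s ∉ palFactors θ p := fun hc => hninf hc.1
  have hsub : insert s (palFactors θ p) ⊆ palFactors θ (p ++ [a]) := by
    rintro q (rfl | hq)
    · exact ⟨suffix_infix h, hpal⟩
    · exact palFactors_mono θ ⟨[], [a], by simp⟩ hq
  have hge : (palFactors θ p).ncard + 1 ≤ (palFactors θ (p ++ [a])).ncard := by
    rw [← Set.ncard_insert_of_notMem hns (palFactors_finite θ p)]
    exact Set.ncard_le_ncard hsub (palFactors_finite θ _)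
  have hle := ncard_palFactors_snoc_le hθ p a
  have hPeq : (palFactors θ (p ++ [a])).ncard = (palFactors θ p).ncard + 1 := by omega
  unfold defect
  rw [length_snoc, hγ, hPeq]
  push_cast
  ring

lemma exists_new_of_defect_eq {p : List A} {a : A}
    (hd : defect θ (p ++ [a]) = defect θ p)
    (hγ : gammaTheta θ p = gammaTheta θ (p ++ [a])) :
    ∃ q, q ∈ palFactors θ (p ++ [a]) ∧ q ∉ palFactors θ p := by
  have hPeq : (palFactors θ (p ++ [a])).ncard = (palFactors θ p).ncard + 1 := by
    unfold defect at hd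
    rw [length_snoc, hγ] at hd
    push_cast at hd
    omega
  have hss : palFactors θ p ⊂ palFactors θ (p ++ [a]) := by
    refine ⟨palFactors_mono θ ⟨[], [a], by simp⟩, fun hc => ?_⟩
    have : palFactors θ p = palFactors θ (p ++ [a]) :=
      Set.Subset.antisymm (palFactors_mono θ ⟨[], [a], by simp⟩) hc
    rw [this] at hPeq
    omega
  obtain ⟨q, hq, hq'⟩ := Set.exists_of_ssubset hss
  exact ⟨q, hq, hq'⟩

lemma defect_cons_mono (hθ : Function.Involutive θ) (b : A) (v : List A) :
    defect θ v ≤ defect θ (b :: v) := by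
  have h1 : antim θ (b :: v) = antim θ v ++ [θ b] := by
    rw [show (b :: v) = [b] ++ v from rfl, antim_append, antim_singleton]
  calc defect θ v = defect θ (antim θ v) := (defect_antim hθ v).symm
    _ ≤ defect θ (antim θ v ++ [θ b]) := defect_snoc_mono hθ _ _
    _ = defect θ (antim θ (b :: v)) := by rw [h1]
    _ = defect θ (b :: v) := defect_antim hθ _

lemma defect_suffix_mono (hθ : Function.Involutive θ) {v w : List A} (h : v <:+ w) :
    defect θ v ≤ defect θ w := by
  obtain ⟨x, rfl⟩ := h
  induction x with
  | nil => simp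
  | cons b x ih => exact le_trans ih (defect_cons_mono hθ b (x ++ v))

lemma defect_nil : defect θ ([] : List A) = 0 := by
  unfold defect
  have h1 : gammaTheta θ ([] : List A) = 0 := by
    unfold gammaTheta
    convert Set.ncard_empty (Set A)
    ext s
    simp
  have h2 : palFactors θ ([] : List A) = {[]} := by
    ext q
    simp only [palFactors, Set.mem_setOf_eq, Set.mem_singleton_iff]
    constructor
    · rintro ⟨hinf, -⟩
      exact List.eq_nil_of_infix_nil hinf
    · rintro rfl
      exact ⟨List.nil_infix, palin_nil θ⟩
  rw [h1, h2, Set.ncard_singleton]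
  simp

end Defect

section Pref
variable {A : Type*}

/-- The prefix of `u` of length `n`. -/
def pref (u : ℕ → A) (n : ℕ) : List A := (List.range n).map u

lemma pref_length (u : ℕ → A) (n : ℕ) : (pref u n).length = n := by simp [pref]

lemma pref_succ (u : ℕ → A) (n : ℕ) : pref u (n + 1) = pref u n ++ [u n] := by
  simp [pref, List.range_succ]

lemma pref_occursAt (u : ℕ → A) (n : ℕ) : OccursAt u (pref u n) 0 := by
  simp [OccursAt, pref]

lemma occursAt_zero_eq_pref {u : ℕ → A} {w : List A} (h : OccursAt u w 0) :
    w = pref u w.length := by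
  have h' : w = (List.range w.length).map fun k => u (0 + k) := h
  simpa [pref] using h'

lemma occursAt_suffix {u : ℕ → A} {w : List A} {i : ℕ} (h : OccursAt u w i) :
    w <:+ pref u (i + w.length) := by
  have h' : w = (List.range w.length).map fun k => u (i + k) := h
  have hw : pref u (i + w.length) = pref u i ++ w := by
    rw [pref, List.range_add, List.map_append, List.map_map]
    congr 1
    conv_rhs => rw [h']
    simp [Function.comp]
  exact ⟨pref u i, hw.symm⟩

lemma exists_max_pal_suffix (θ : A → A) (w : List A) :
    ∃ s, s <:+ w ∧ IsPalin θ s ∧ ∀ t, t <:+ w → IsPalin θ t → t.length ≤ s.length := by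
  classical
  set T : Finset (List A) :=
    w.sublists.toFinset.filter (fun t => t <:+ w ∧ IsPalin θ t) with hT
  have hmemT : ∀ t : List A, t ∈ T ↔ t <:+ w ∧ IsPalin θ t := by
    intro t
    simp only [hT, Finset.mem_filter, List.mem_toFinset, List.mem_sublists]
    constructor
    · rintro ⟨-, h⟩; exact h
    · rintro ⟨h1, h2⟩; exact ⟨h1.sublist, h1, h2⟩
  have hne : T.Nonempty := ⟨[], (hmemT []).mpr ⟨List.nil_suffix, palin_nil θ⟩⟩
  obtain ⟨s, hs, hmax⟩ := T.exists_max_image List.length hne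
  obtain ⟨hs1, hs2⟩ := (hmemT s).mp hs
  exact ⟨s, hs1, hs2, fun t ht1 ht2 => hmax t ((hmemT t).mpr ⟨ht1, ht2⟩)⟩

end Pref


/-- An infinite word `u` over a finite alphabet has finite `Θ`-defect
if and only if there exists `H` such that for every prefix `w` of `u` with `|w| ≥ H`
which is not of the exceptional form `w = p ++ [a]` with `γ_Θ(p) ≠ γ_Θ(w)`,
the longest `Θ`-palindromic suffix of `w` occurs in `w` exactly once. -/
theorem finite_defect_iff_longest_pal_suffix_unioccurrent
    {A : Type*} [Fintype A] (θ : A → A) (hθ : Function.Involutive θ)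
    (u : ℕ → A) :
    (∃ B : ℤ, ∀ w : List A, IsFactor u w → defect θ w ≤ B) ↔
    ∃ H : ℕ, ∀ w : List A, OccursAt u w 0 → H ≤ w.length →
      (∀ (p : List A) (a : A), w = p ++ [a] → gammaTheta θ p = gammaTheta θ w) →
      ∀ s : List A, s <:+ w → IsPalin θ s →
        (∀ t : List A, t <:+ w → IsPalin θ t → t.length ≤ s.length) →
        numOcc s w = 1 := by
  have hmono : Monotone fun n => defect θ (pref u n) :=
    monotone_nat_of_le_succ fun n => by
      rw [pref_succ]; exact defect_snoc_mono hθ _ _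
  constructor
  · rintro ⟨B, hB⟩
    have hBp : ∀ n, defect θ (pref u n) ≤ B := fun n => hB _ ⟨0, pref_occursAt u n⟩
    obtain ⟨M, ⟨H, hH⟩, hub⟩ := Int.exists_greatest_of_bdd
      (P := fun z => ∃ n, defect θ (pref u n) = z)
      ⟨B, by rintro z ⟨n, rfl⟩; exact hBp n⟩ ⟨_, 0, rfl⟩
    have hconst : ∀ n, H ≤ n → defect θ (pref u n) = M := fun n hn =>
      le_antisymm (hub _ ⟨n, rfl⟩) (hH ▸ hmono hn)
    refine ⟨H + 1, ?_⟩
    intro w hw hlen hexc s hs hspal hsmax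
    have hwp := occursAt_zero_eq_pref hw
    obtain ⟨m, hm⟩ : ∃ m, w.length = m + 1 := ⟨w.length - 1, by omega⟩
    have hwpa : w = pref u m ++ [u m] := by rw [hwp, hm, pref_succ]
    have hγ' : gammaTheta θ (pref u m) = gammaTheta θ (pref u m ++ [u m]) := by
      rw [← hwpa]; exact hexc _ _ hwpa
    have hdeq' : defect θ (pref u m ++ [u m]) = defect θ (pref u m) := by
      rw [← pref_succ, hconst (m + 1) (by omega), hconst m (by omega)]
    obtain ⟨q, hq, hq'⟩ := exists_new_of_defect_eq hdeq' hγ'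
    have hqs : q <:+ w := hwpa ▸ new_pal_suffix hq hq'
    have hql : q.length ≤ s.length := hsmax q hqs hq.2
    have hqss : q <:+ s := List.suffix_of_suffix_length_le hqs hs hql
    have hsninf : ¬ s <:+: pref u m := fun hc => hq' ⟨hqss.isInfix.trans hc, hq.2⟩
    rw [hwpa]
    exact (numOcc_suffix_eq_one_iff (hwpa ▸ hs)).mpr hsninf
  · rintro ⟨H, hH⟩
    have hstep : ∀ n, H ≤ n → defect θ (pref u (n + 1)) = defect θ (pref u n) := by
      intro n hn
      rw [pref_succ]
      by_cases hγ : gammaTheta θ (pref u n) = gammaTheta θ (pref u n ++ [u n])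
      · have hocc : OccursAt u (pref u n ++ [u n]) 0 := by
          rw [← pref_succ]; exact pref_occursAt u (n + 1)
        have hlen : H ≤ (pref u n ++ [u n]).length := by
          rw [length_snoc, pref_length]; omega
        have hexc : ∀ (p' : List A) (a' : A), pref u n ++ [u n] = p' ++ [a'] →
            gammaTheta θ p' = gammaTheta θ (pref u n ++ [u n]) := by
          intro p' a' he
          obtain ⟨h1, h2⟩ := List.append_inj' he rfl
          rw [← h1]
          exact hγ
        obtain ⟨s, hs, hspal, hsmax⟩ := exists_max_pal_suffix θ (pref u n ++ [u n])
        have h1 := hH (pref u n ++ [u n]) hocc hlen hexc s hs hspal hsmax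
        have hninf := (numOcc_suffix_eq_one_iff hs).mp h1
        exact defect_snoc_of_new hθ hs hspal hninf hγ
      · exact defect_snoc_exceptional hθ hγ
    have hconst : ∀ n, H ≤ n → defect θ (pref u n) = defect θ (pref u H) := by
      intro n hn
      induction n, hn using Nat.le_induction with
      | base => rfl
      | succ n hn ih => rw [hstep n hn, ih]
    refine ⟨defect θ (pref u H), ?_⟩
    rintro w ⟨i, hocc⟩
    have hsuf := occursAt_suffix hocc
    have h1 : defect θ w ≤ defect θ (pref u (i + w.length)) := defect_suffix_mono hθ hsuf
    rcases le_total (i + w.length) H with h2 | h2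
    · exact le_trans h1 (hmono h2)
    · rw [hconst _ h2] at h1
      exact h1
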